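/- Fix x₀ ∈ ℝ^N and suppose the norm A is decomposable at L* x₀ with data (T₀, e₀); set S₀ := T₀⊥. Let C_Φ > 0 satisfy ‖Φ x‖₂ ≥ C_Φ ‖x‖₂ for all x ∈ ker(L_{S₀}*), let C_L > 0 satisfy ‖L_{S₀}* x‖₂ ≥ C_L ‖x‖₂ for all x ∈ (ker L_{S₀}*)⊥, and let C_A > 0 satisfy A(z) ≥ C_A ‖z‖₂ for all z ∈ ℝ^P. Let ε > 0, c > 0, and w ∈ ℝ^M with ‖w‖₂ ≤ ε; set y := Φ x₀ + w and λ := c ε. Suppose the source condition SC(x₀) holds with (η, α) and A*(P_{S₀} α) < 1. Then every minimizer x⋆ of problem (P) satisfies ‖x⋆ − x₀‖₂ ≤ [ (2 + c‖η‖₂)/C_Φ + ((‖Φ‖ + C_Φ)/(C_L C_Φ C_A)) · (1 + c‖η‖₂/2)² / (c (1 − A*(P_{S₀} α))) ] ε, where ‖Φ‖ is the operator norm of Φ with respect to the Euclidean norms. -/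

import Mathlib

open RealInnerProductSpace

noncomputable section

abbrev Euc (n : ℕ) := EuclideanSpace ℝ (Fin n)

def proj {n : ℕ} (V : Submodule ℝ (Euc n)) : Euc n →L[ℝ] Euc n :=
  V.subtypeL.comp (V.orthogonalProjectionOnto)

def dualNorm {n : ℕ} (A : Euc n → ℝ) (α : Euc n) : ℝ :=
  sSup {r : ℝ | ∃ v : Euc n, A v ≤ 1 ∧ r = ⟪α, v⟫}

def subdiff {n : ℕ} (f : Euc n → ℝ) (x : Euc n) : Set (Euc n) :=
  {g : Euc n | ∀ y : Euc n, f x + ⟪g, y - x⟫ ≤ f y}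

def IsNorm {n : ℕ} (A : Euc n → ℝ) : Prop :=
  (∀ x, A x = 0 ↔ x = 0) ∧ (∀ (c : ℝ) (x : Euc n), A (c • x) = |c| * A x) ∧
    (∀ x y, A (x + y) ≤ A x + A y)

def Decomposable {n : ℕ} (A : Euc n → ℝ) (u : Euc n) (T : Submodule ℝ (Euc n)) (e : Euc n) :
    Prop :=
  e ∈ T ∧
  subdiff A u = {α : Euc n | proj T α = e ∧ dualNorm A (proj Tᗮ α) ≤ 1} ∧
  ∀ z : Euc n, z ∈ Tᗮ →
    A z = sSup {r : ℝ | ∃ v ∈ (Tᗮ : Submodule ℝ (Euc n)), dualNorm A v ≤ 1 ∧ r = ⟪v, z⟫}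

def obj {N M P : ℕ} (Φ : Euc N →L[ℝ] Euc M) (L : Euc P →L[ℝ] Euc N) (A : Euc P → ℝ)
    (y : Euc M) (lam : ℝ) (x : Euc N) : ℝ :=
  (1/2) * ‖y - Φ x‖^2 + lam * A (ContinuousLinearMap.adjoint L x)

def SC {N M P : ℕ} (Φ : Euc N →L[ℝ] Euc M) (L : Euc P →L[ℝ] Euc N) (A : Euc P → ℝ)
    (x : Euc N) (η : Euc M) (α : Euc P) : Prop :=
  α ∈ subdiff A (ContinuousLinearMap.adjoint L x) ∧
  ContinuousLinearMap.adjoint Φ η = L α ∧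
  L α ∈ subdiff (fun z => A (ContinuousLinearMap.adjoint L z)) x

def breg {n : ℕ} (A : Euc n → ℝ) (α u u₀ : Euc n) : ℝ :=
  A u - A u₀ - ⟪α, u - u₀⟫


lemma proj_mem {n : ℕ} (V : Submodule ℝ (Euc n)) (x : Euc n) : proj V x ∈ V :=
  (V.orthogonalProjectionOnto x).2

lemma proj_eq_self {n : ℕ} {V : Submodule ℝ (Euc n)} {x : Euc n} (hx : x ∈ V) : proj V x = x :=
  V.starProjection_eq_self_iff.mpr hx

lemma proj_eq_zero {n : ℕ} {V : Submodule ℝ (Euc n)} {x : Euc n} (hx : x ∈ Vᗮ) : proj V x = 0 := by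
  simp [proj, Submodule.orthogonalProjectionOnto_apply_of_mem_orthogonal hx]

lemma proj_inner {n : ℕ} (V : Submodule ℝ (Euc n)) (a b : Euc n) :
    ⟪proj V a, b⟫ = ⟪a, proj V b⟫ :=
  Submodule.inner_starProjection_left_eq_right V a b

lemma dualNorm_bddAbove {n : ℕ} {A : Euc n → ℝ} {CA : ℝ} (hCA : 0 < CA)
    (hCAbd : ∀ z : Euc n, CA * ‖z‖ ≤ A z) (u : Euc n) :
    BddAbove {r : ℝ | ∃ v : Euc n, A v ≤ 1 ∧ r = ⟪u, v⟫} := by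
  refine ⟨‖u‖ / CA, fun r hr => ?_⟩
  obtain ⟨v, hv, rfl⟩ := hr
  have h1 : ‖v‖ ≤ 1 / CA := by
    rw [le_div_iff₀ hCA]; nlinarith [hCAbd v]
  calc ⟪u, v⟫ ≤ ‖u‖ * ‖v‖ := real_inner_le_norm u v
    _ ≤ ‖u‖ * (1 / CA) := by nlinarith [norm_nonneg u]
    _ = ‖u‖ / CA := by ring

lemma inner_le_dualNorm {n : ℕ} {A : Euc n → ℝ} (hA : IsNorm A) {CA : ℝ} (hCA : 0 < CA)
    (hCAbd : ∀ z : Euc n, CA * ‖z‖ ≤ A z) (u z : Euc n) :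
    ⟪u, z⟫ ≤ dualNorm A u * A z := by
  rcases eq_or_ne z 0 with rfl | hz
  · simp [(hA.1 0).mpr rfl]
  · have hAz : 0 < A z := by
      have h1 : 0 < CA * ‖z‖ := mul_pos hCA (norm_pos_iff.mpr hz)
      linarith [hCAbd z]
    have hv : A ((A z)⁻¹ • z) ≤ 1 := by
      rw [hA.2.1, abs_of_pos (inv_pos.mpr hAz), inv_mul_cancel₀ hAz.ne']
    have hmem : ⟪u, (A z)⁻¹ • z⟫ ∈ {r : ℝ | ∃ v : Euc n, A v ≤ 1 ∧ r = ⟪u, v⟫} :=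
      ⟨_, hv, rfl⟩
    have hle : ⟪u, (A z)⁻¹ • z⟫ ≤ dualNorm A u :=
      le_csSup (dualNorm_bddAbove hCA hCAbd u) hmem
    rw [real_inner_smul_right] at hle
    calc ⟪u, z⟫ = A z * ((A z)⁻¹ * ⟪u, z⟫) := by field_simp
      _ ≤ A z * dualNorm A u := by nlinarith
      _ = dualNorm A u * A z := by ring

lemma dualNorm_zero_le_one {n : ℕ} {A : Euc n → ℝ} (hA : IsNorm A) :
    dualNorm A (0 : Euc n) ≤ 1 := by
  have hne : (0:ℝ) ∈ {r : ℝ | ∃ v : Euc n, A v ≤ 1 ∧ r = ⟪(0 : Euc n), v⟫} :=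
    ⟨0, (le_of_eq ((hA.1 0).mpr rfl)).trans zero_le_one, by simp⟩
  apply csSup_le ⟨0, hne⟩
  rintro r ⟨v, hv, rfl⟩
  simp


set_option maxHeartbeats 4000000 in
theorem stmt6 {N M P : ℕ} (Φ : Euc N →L[ℝ] Euc M) (L : Euc P →L[ℝ] Euc N)
    (A : Euc P → ℝ) (hA : IsNorm A) (x₀ : Euc N)
    (T₀ : Submodule ℝ (Euc P)) (e₀ : Euc P)
    (hdec : Decomposable A (ContinuousLinearMap.adjoint L x₀) T₀ e₀)
    (CΦ CL CA : ℝ) (hCΦ : 0 < CΦ) (hCL : 0 < CL) (hCA : 0 < CA)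
    (hCΦbd : ∀ x : Euc N, proj T₀ᗮ (ContinuousLinearMap.adjoint L x) = 0 → CΦ * ‖x‖ ≤ ‖Φ x‖)
    (hCLbd : ∀ x ∈ (LinearMap.ker (((proj T₀ᗮ).comp (ContinuousLinearMap.adjoint L)) : Euc N →ₗ[ℝ] Euc P))ᗮ,
        CL * ‖x‖ ≤ ‖proj T₀ᗮ (ContinuousLinearMap.adjoint L x)‖)
    (hCAbd : ∀ z : Euc P, CA * ‖z‖ ≤ A z)
    (ε c : ℝ) (hε : 0 < ε) (hc : 0 < c) (w : Euc M) (hw : ‖w‖ ≤ ε)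
    (η : Euc M) (α : Euc P) (hSC : SC Φ L A x₀ η α)
    (hsat : dualNorm A (proj T₀ᗮ α) < 1)
    (xs : Euc N)
    (hmin : ∀ x, obj Φ L A (Φ x₀ + w) (c * ε) xs ≤ obj Φ L A (Φ x₀ + w) (c * ε) x) :
    ‖xs - x₀‖ ≤
      ((2 + c * ‖η‖) / CΦ +
        ((‖Φ‖ + CΦ) / (CL * CΦ * CA)) * (1 + c * ‖η‖ / 2) ^ 2 /
          (c * (1 - dualNorm A (proj T₀ᗮ α)))) * ε := by
  obtain ⟨hα, hΦη, -⟩ := hSC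
  obtain ⟨he₀, hsub, hAS⟩ := hdec
  set ρ : ℝ := dualNorm A (proj T₀ᗮ α) with hρdef
  set lam : ℝ := c * ε with hlamdef
  have hlam : 0 < lam := mul_pos hc hε
  set h : Euc N := xs - x₀ with hhdef
  set u₀ : Euc P := ContinuousLinearMap.adjoint L x₀ with hu₀def
  set us : Euc P := ContinuousLinearMap.adjoint L xs with husdef
  have husu : us - u₀ = ContinuousLinearMap.adjoint L h := by
    rw [hhdef, map_sub]
  set z : Euc P := proj T₀ᗮ (ContinuousLinearMap.adjoint L h) with hzdef
  set D : ℝ := A us - A u₀ - ⟪α, us - u₀⟫ with hDdef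
  -- D ≥ 0
  have hD0 : 0 ≤ D := by
    have h1 : A u₀ + ⟪α, us - u₀⟫ ≤ A us := hα us
    simp only [hDdef]; linarith
  -- ⟪α, us - u₀⟫ = ⟪η, Φ h⟫
  have hαh : ⟪α, us - u₀⟫ = ⟪η, Φ h⟫ := by
    rw [husu, ContinuousLinearMap.adjoint_inner_right, ← hΦη,
      ContinuousLinearMap.adjoint_inner_left]
  -- Step B : comparison with x_t
  have hBt : ∀ t : ℝ, 0 < t → t ≤ 1 →
      lam * (A us - A u₀) ≤ ⟪w - Φ h, Φ h⟫ + t * (‖Φ h‖ ^ 2 / 2) := by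
    intro t ht ht1
    have hnm := hmin (xs + t • (x₀ - xs))
    simp only [obj] at hnm
    have e1 : Φ x₀ + w - Φ xs = w - Φ h := by
      simp only [hhdef, map_sub]; abel
    have e2 : Φ x₀ + w - Φ (xs + t • (x₀ - xs)) = (w - Φ h) + t • Φ h := by
      simp only [hhdef, map_add, map_smul, map_sub]; module
    have e3 : ContinuousLinearMap.adjoint L (xs + t • (x₀ - xs)) = (1 - t) • us + t • u₀ := by
      simp only [husdef, hu₀def, map_add, map_smul, map_sub]; module
    rw [e1, e2, e3] at hnm
    have hAconv : A ((1 - t) • us + t • u₀) ≤ (1 - t) * A us + t * A u₀ := by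
      calc A ((1 - t) • us + t • u₀) ≤ A ((1 - t) • us) + A (t • u₀) := hA.2.2 _ _
        _ = |1 - t| * A us + |t| * A u₀ := by rw [hA.2.1, hA.2.1]
        _ = (1 - t) * A us + t * A u₀ := by
            rw [abs_of_nonneg (by linarith), abs_of_pos ht]
    have hexp : ‖(w - Φ h) + t • Φ h‖ ^ 2
        = ‖w - Φ h‖ ^ 2 + 2 * (t * ⟪w - Φ h, Φ h⟫) + t ^ 2 * ‖Φ h‖ ^ 2 := by
      rw [norm_add_sq_real, real_inner_smul_right, norm_smul, mul_pow, Real.norm_eq_abs,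
        sq_abs]
    rw [hexp] at hnm
    have hAconv' := mul_le_mul_of_nonneg_left hAconv hlam.le
    have h4 : t * (lam * (A us - A u₀)) ≤ t * (⟪w - Φ h, Φ h⟫ + t * (‖Φ h‖ ^ 2 / 2)) := by
      nlinarith [hnm, hAconv']
    exact le_of_mul_le_mul_left h4 ht
  -- limit t → 0
  have hB : lam * (A us - A u₀) ≤ ⟪w - Φ h, Φ h⟫ := by
    by_contra hcon
    push_neg at hcon
    set δ : ℝ := lam * (A us - A u₀) - ⟪w - Φ h, Φ h⟫ with hδdef
    have hδ : 0 < δ := by simp only [hδdef]; linarith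
    set t : ℝ := min 1 (δ / (‖Φ h‖ ^ 2 + 1)) with htdef
    have ht0 : 0 < t := lt_min one_pos (by positivity)
    have ht1 : t ≤ 1 := min_le_left _ _
    have ht2 : t ≤ δ / (‖Φ h‖ ^ 2 + 1) := min_le_right _ _
    have hkey := hBt t ht0 ht1
    have h5 : t * (‖Φ h‖ ^ 2 / 2) < δ := by
      have h6 : t * (‖Φ h‖ ^ 2 / 2) ≤ (δ / (‖Φ h‖ ^ 2 + 1)) * (‖Φ h‖ ^ 2 / 2) :=
        mul_le_mul_of_nonneg_right ht2 (by positivity)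
      have h7 : (δ / (‖Φ h‖ ^ 2 + 1)) * (‖Φ h‖ ^ 2 / 2) < δ := by
        rw [div_mul_eq_mul_div, div_lt_iff₀ (by positivity)]
        nlinarith [sq_nonneg ‖Φ h‖]
      linarith
    linarith
  -- quadratic bounds
  have hlamD : lam * D ≤ -‖Φ h‖ ^ 2 + (ε + lam * ‖η‖) * ‖Φ h‖ := by
    have h8 : ⟪w - Φ h, Φ h⟫ = ⟪w, Φ h⟫ - ‖Φ h‖ ^ 2 := by
      rw [inner_sub_left, real_inner_self_eq_norm_sq]
    have h9 : ⟪w, Φ h⟫ ≤ ε * ‖Φ h‖ := by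
      calc ⟪w, Φ h⟫ ≤ ‖w‖ * ‖Φ h‖ := real_inner_le_norm _ _
        _ ≤ ε * ‖Φ h‖ := mul_le_mul_of_nonneg_right hw (norm_nonneg _)
    have h10 : -⟪η, Φ h⟫ ≤ ‖η‖ * ‖Φ h‖ := by
      have h10' := abs_real_inner_le_norm η (Φ h)
      have := neg_abs_le ⟪η, Φ h⟫
      linarith
    have h11 : lam * D = lam * (A us - A u₀) - lam * ⟪η, Φ h⟫ := by
      simp only [hDdef, hαh]; ring
    nlinarith [mul_le_mul_of_nonneg_left h10 hlam.le]
  have hb0 : 0 < ε + lam * ‖η‖ := by positivity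
  have hs : ‖Φ h‖ ≤ ε + lam * ‖η‖ := by
    nlinarith [mul_nonneg hlam.le hD0, norm_nonneg (Φ h)]
  have hDb : lam * D ≤ (ε + lam * ‖η‖) ^ 2 / 4 := by
    nlinarith [sq_nonneg (‖Φ h‖ - (ε + lam * ‖η‖) / 2)]
  -- Step D : Bregman vs A z
  have hzS : z ∈ T₀ᗮ := proj_mem _ _
  have hρ1 : 0 < 1 - ρ := by linarith
  have hAz0 : 0 ≤ A z := le_trans (by positivity) (hCAbd z)
  have hραz : ⟪proj T₀ᗮ α, us - u₀⟫ ≤ ρ * A z := by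
    rw [husu, proj_inner, ← hzdef]
    calc ⟪α, z⟫ = ⟪proj T₀ᗮ α, z⟫ := by rw [proj_inner, proj_eq_self hzS]
      _ ≤ ρ * A z := inner_le_dualNorm hA hCA hCAbd _ _
  have hα' : proj T₀ α = e₀ ∧ dualNorm A (proj T₀ᗮ α) ≤ 1 := by
    rw [hsub] at hα; exact hα
  have hDz : A z ≤ D + ρ * A z := by
    have hsup : sSup {r : ℝ | ∃ v ∈ (T₀ᗮ : Submodule ℝ (Euc P)), dualNorm A v ≤ 1 ∧ r = ⟪v, z⟫}
        ≤ D + ρ * A z := by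
      apply csSup_le
      · exact ⟨0, 0, Submodule.zero_mem _, dualNorm_zero_le_one hA, by simp⟩
      rintro r ⟨v, hvS, hvd, rfl⟩
      set β : Euc P := α + v - proj T₀ᗮ α with hβdef
      have hβT : proj T₀ β = e₀ := by
        simp only [hβdef, map_add, map_sub, proj_eq_zero hvS,
          proj_eq_zero (proj_mem T₀ᗮ α), hα'.1]
        abel
      have hβS : proj T₀ᗮ β = v := by
        simp only [hβdef, map_add, map_sub, proj_eq_self hvS,
          proj_eq_self (proj_mem T₀ᗮ α)]
        abel
      have hβ : β ∈ subdiff A u₀ := by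
        rw [hsub]; exact ⟨hβT, by rw [hβS]; exact hvd⟩
      have h6 : A u₀ + ⟪β, us - u₀⟫ ≤ A us := hβ us
      have h7 : ⟪β, us - u₀⟫ = ⟪α, us - u₀⟫ + ⟪v, us - u₀⟫ - ⟪proj T₀ᗮ α, us - u₀⟫ := by
        simp only [hβdef, inner_add_left, inner_sub_left]
      have h8 : ⟪v, us - u₀⟫ = ⟪v, z⟫ := by
        rw [husu, ← proj_eq_self hvS, proj_inner, ← hzdef, proj_eq_self hvS]
      rw [← h8]
      simp only [hDdef]
      linarith [hραz]
    calc A z = _ := hAS z hzS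
      _ ≤ D + ρ * A z := hsup
  have hAzD : (1 - ρ) * A z ≤ D := by linarith
  clear_value D z us u₀ h lam ρ
  -- Step E : decomposition of h
  set K : Submodule ℝ (Euc N) :=
    LinearMap.ker (((proj T₀ᗮ).comp (ContinuousLinearMap.adjoint L)) : Euc N →ₗ[ℝ] Euc P) with hKdef
  set h₁ : Euc N := (K.orthogonalProjectionOnto h : Euc N) with hh₁def
  set h₂ : Euc N := (Kᗮ.orthogonalProjectionOnto h : Euc N) with hh₂def
  have hsum : h₁ + h₂ = h := K.starProjection_add_starProjection_orthogonal h
  have hm1 : h₁ ∈ K := SetLike.coe_mem _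
  have hk1 : proj T₀ᗮ (ContinuousLinearMap.adjoint L h₁) = 0 := by
    have := LinearMap.mem_ker.mp hm1
    simpa using this
  have hΦ1 : CΦ * ‖h₁‖ ≤ ‖Φ h₁‖ := hCΦbd h₁ hk1
  have hm2 : h₂ ∈ Kᗮ := SetLike.coe_mem _
  have hL2 : CL * ‖h₂‖ ≤ ‖proj T₀ᗮ (ContinuousLinearMap.adjoint L h₂)‖ := hCLbd h₂ hm2
  have hz2 : proj T₀ᗮ (ContinuousLinearMap.adjoint L h₂) = z := by
    have e4 : h₂ = h - h₁ := by rw [← hsum]; abel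
    rw [e4, map_sub, map_sub, hk1, ← hzdef, sub_zero]
  have hn2 : CL * ‖h₂‖ ≤ ‖z‖ := by rw [hz2] at hL2; exact hL2
  have hΦh1 : ‖Φ h₁‖ ≤ ‖Φ h‖ + ‖Φ‖ * ‖h₂‖ := by
    have e5 : Φ h₁ = Φ h - Φ h₂ := by rw [← hsum, map_add]; abel
    calc ‖Φ h₁‖ = ‖Φ h - Φ h₂‖ := by rw [e5]
      _ ≤ ‖Φ h‖ + ‖Φ h₂‖ := norm_sub_le _ _
      _ ≤ ‖Φ h‖ + ‖Φ‖ * ‖h₂‖ := by linarith [Φ.le_opNorm h₂]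
  have hnh : ‖h‖ ≤ ‖h₁‖ + ‖h₂‖ := by rw [← hsum]; exact norm_add_le _ _
  clear hh₁def hh₂def hm1 hm2 hKdef hCLbd
  clear_value h₂ h₁ K
  -- final arithmetic
  have H1 : CΦ * ‖h‖ ≤ ‖Φ h‖ + (‖Φ‖ + CΦ) * ‖h₂‖ := by
    nlinarith [mul_le_mul_of_nonneg_left hnh hCΦ.le, norm_nonneg h₂]
  have H3 : ‖h₂‖ ≤ ε * (1 + c * ‖η‖ / 2) ^ 2 / (c * (1 - ρ) * (CL * CA)) := by
    rw [le_div_iff₀ (by positivity)]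
    have i1 : CL * CA * ‖h₂‖ ≤ A z := by
      nlinarith [mul_le_mul_of_nonneg_left hn2 hCA.le, hCAbd z]
    have i2 : (1 - ρ) * (CL * CA * ‖h₂‖) ≤ D :=
      le_trans (mul_le_mul_of_nonneg_left i1 hρ1.le) hAzD
    have i3 : lam * ((1 - ρ) * (CL * CA * ‖h₂‖)) ≤ (ε + lam * ‖η‖) ^ 2 / 4 :=
      le_trans (mul_le_mul_of_nonneg_left i2 hlam.le) hDb
    have i4 : (ε + lam * ‖η‖) ^ 2 / 4 ≤ ε * (ε * (1 + c * ‖η‖ / 2) ^ 2) := by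
      rw [hlamdef]
      nlinarith [norm_nonneg η, sq_nonneg (c * ‖η‖), mul_nonneg hc.le (norm_nonneg η), hε.le]
    rw [hlamdef] at i3
    nlinarith [i3, i4]
  have hprod : (‖Φ‖ + CΦ) * ‖h₂‖
      ≤ (‖Φ‖ + CΦ) * (ε * (1 + c * ‖η‖ / 2) ^ 2 / (c * (1 - ρ) * (CL * CA))) :=
    mul_le_mul_of_nonneg_left H3 (by positivity)
  have key : CΦ * (((2 + c * ‖η‖) / CΦ +
        (‖Φ‖ + CΦ) / (CL * CΦ * CA) * (1 + c * ‖η‖ / 2) ^ 2 / (c * (1 - ρ))) * ε)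
      = (2 + c * ‖η‖) * ε
        + (‖Φ‖ + CΦ) * (ε * (1 + c * ‖η‖ / 2) ^ 2 / (c * (1 - ρ) * (CL * CA))) := by
    field_simp
  have final : CΦ * ‖h‖ ≤ CΦ * (((2 + c * ‖η‖) / CΦ +
      (‖Φ‖ + CΦ) / (CL * CΦ * CA) * (1 + c * ‖η‖ / 2) ^ 2 / (c * (1 - ρ))) * ε) := by
    rw [key]
    have : ε + lam * ‖η‖ ≤ (2 + c * ‖η‖) * ε := by
      rw [hlamdef]; nlinarith [mul_nonneg hc.le (norm_nonneg η)]
    linarith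
  exact le_of_mul_le_mul_left final hCΦ
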